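/- The entropy of the law GW_{μ,d} of a Galton-Watson tree with Poisson(μ) offspring distribution truncated at depth d satisfies the recursion Ent(GW_{μ,d}) = Ent(GW_{μ,d−1}) + μ^{d−1}·Ent(π_μ), where Ent(π_μ) is the entropy of the Poisson(μ) distribution. Consequently, if μ < 1 then Ent(GW_{μ,d}) ≤ Ent(π_μ)/(1−μ) for all d. -/

import Mathlib

/-- Rooted trees given by the list of subtrees of the root. -/
inductive PTree where
  | node : List PTree → PTree

/-- Poisson pmf with parameter `μ`. -/
noncomputable def poissonPMF (μ : ℝ) (k : ℕ) : ℝ :=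
  Real.exp (-μ) * μ ^ k / (Nat.factorial k)

/-- pmf of the Galton-Watson tree with Poisson(μ) offspring, pruned at depth `d`. -/
noncomputable def gw (μ : ℝ) : ℕ → PTree → ℝ := fun d =>
  Nat.rec
    (fun t => match t with | .node l => if l.isEmpty then 1 else 0)
    (fun _ ih t => match t with | .node l => poissonPMF μ l.length * (l.map ih).prod)
    d

/-- Shannon entropy of a pmf on trees. -/
noncomputable def ent (P : PTree → ℝ) : ℝ := -∑' t : PTree, P t * Real.log (P t)

namespace GWAux



variable {μ : ℝ}

lemma pois_pos (hμ : 0 < μ) (k : ℕ) : 0 < poissonPMF μ k := by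
  unfold poissonPMF
  positivity

lemma pois_summable : Summable (poissonPMF μ) := by
  have := (Real.summable_pow_div_factorial μ).mul_left (Real.exp (-μ))
  refine this.congr fun k => ?_
  rw [poissonPMF, mul_div_assoc]

lemma pois_tsum : ∑' k, poissonPMF μ k = 1 := by
  have h1 : ∑' k : ℕ, μ ^ k / (Nat.factorial k) = Real.exp μ := by
    rw [Real.exp_eq_exp_ℝ, NormedSpace.exp_eq_tsum_div]
  calc ∑' k, poissonPMF μ k = ∑' k : ℕ, Real.exp (-μ) * (μ ^ k / (Nat.factorial k)) := by
        refine tsum_congr fun k => ?_; rw [poissonPMF, mul_div_assoc]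
    _ = Real.exp (-μ) * Real.exp μ := by rw [tsum_mul_left, h1]
    _ = 1 := by rw [← Real.exp_add]; simp

lemma pois_succ (k : ℕ) : poissonPMF μ (k + 1) * (k + 1 : ℝ) = μ * poissonPMF μ k := by
  have hk : ((Nat.factorial k : ℝ)) ≠ 0 := Nat.cast_ne_zero.mpr (Nat.factorial_ne_zero k)
  have hk1 : ((k : ℝ) + 1) ≠ 0 := by positivity
  rw [poissonPMF, poissonPMF, Nat.factorial_succ]
  push_cast
  field_simp
  ring

lemma pois_mul_summable : Summable (fun k => poissonPMF μ k * (k : ℝ)) := by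
  refine (summable_nat_add_iff 1).mp ?_
  refine ((pois_summable (μ := μ)).mul_left μ).congr fun k => ?_
  push_cast
  exact (pois_succ k).symm

lemma pois_mean : ∑' k, poissonPMF μ k * (k : ℝ) = μ := by
  rw [Summable.tsum_eq_zero_add pois_mul_summable]
  simp only [Nat.cast_zero, mul_zero, zero_add]
  have h : (∑' k : ℕ, poissonPMF μ (k + 1) * (((k + 1 : ℕ)) : ℝ)) = ∑' k : ℕ, μ * poissonPMF μ k :=
    tsum_congr fun k => by push_cast; exact pois_succ k
  rw [h, tsum_mul_left, pois_tsum, mul_one]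

lemma pois_sq_summable : Summable (fun k => poissonPMF μ k * ((k : ℝ) * k)) := by
  refine (summable_nat_add_iff 2).mp ?_
  have h : Summable (fun k => μ * (μ * poissonPMF μ k) + μ * poissonPMF μ (k + 1)) := by
    exact ((pois_summable.mul_left μ).mul_left μ).add
      (((summable_nat_add_iff 1).mpr pois_summable).mul_left μ)
  refine h.congr fun k => ?_
  have h1 : poissonPMF μ (k + 1 + 1) * ((k : ℝ) + 1 + 1) = μ * poissonPMF μ (k + 1) := by
    have := pois_succ (μ := μ) (k + 1); push_cast at this ⊢; linarith
  have h2 := pois_succ (μ := μ) k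
  push_cast
  calc μ * (μ * poissonPMF μ k) + μ * poissonPMF μ (k + 1)
      = (poissonPMF μ (k+1) * ((k:ℝ)+1)) * μ + μ * poissonPMF μ (k + 1) := by rw [h2]; ring
    _ = (μ * poissonPMF μ (k+1)) * ((k:ℝ)+1) + μ * poissonPMF μ (k+1) := by ring
    _ = (poissonPMF μ (k+1+1) * ((k:ℝ)+1+1)) * ((k:ℝ)+1) + poissonPMF μ (k+1+1) * ((k:ℝ)+1+1) := by
        rw [h1]
    _ = poissonPMF μ (k + 1 + 1) * (((k:ℝ)+1+1) * ((k:ℝ)+1+1)) := by ring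
    _ = poissonPMF μ (k + 2) * (((k:ℝ)+2) * ((k:ℝ)+2)) := by norm_num [add_assoc]

lemma pois_le_one (hμ : 0 < μ) (k : ℕ) : poissonPMF μ k ≤ 1 := by
  have := Summable.le_tsum pois_summable k (fun j _ => (pois_pos hμ j).le)
  rwa [pois_tsum] at this

lemma log_factorial_le (k : ℕ) : Real.log (Nat.factorial k) ≤ (k : ℝ) * k := by
  have h1 : (Nat.factorial k : ℝ) ≤ (k : ℝ) ^ k := by
    calc (Nat.factorial k : ℝ) ≤ ((k ^ k : ℕ) : ℝ) := Nat.cast_le.mpr (Nat.factorial_le_pow k)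
      _ = (k : ℝ) ^ k := by push_cast; ring
  have h2 : Real.log (Nat.factorial k) ≤ Real.log ((k : ℝ) ^ k) := by
    apply Real.log_le_log (by positivity) h1
  refine h2.trans ?_
  rw [Real.log_pow]
  rcases Nat.eq_zero_or_pos k with hk | hk
  · simp [hk]
  · have : Real.log k ≤ (k : ℝ) := by
      have := Real.log_le_sub_one_of_pos (x := (k : ℝ)) (by positivity)
      linarith
    have hk0 : (0 : ℝ) ≤ k := by positivity
    calc (k : ℝ) * Real.log k ≤ (k : ℝ) * k := by
          exact mul_le_mul_of_nonneg_left this hk0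

lemma pois_log (hμ : 0 < μ) (k : ℕ) :
    Real.log (poissonPMF μ k) = -μ + (k : ℝ) * Real.log μ - Real.log (Nat.factorial k) := by
  have hf : ((Nat.factorial k : ℝ)) ≠ 0 := Nat.cast_ne_zero.mpr (Nat.factorial_ne_zero k)
  rw [poissonPMF, Real.log_div (by positivity) hf, Real.log_mul (by positivity) (by positivity),
    Real.log_exp, Real.log_pow]

lemma pois_plogp_summable (hμ : 0 < μ) :
    Summable (fun k => poissonPMF μ k * Real.log (poissonPMF μ k)) := by
  have h3 : Summable (fun k => poissonPMF μ k * Real.log (Nat.factorial k)) := by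
    refine Summable.of_nonneg_of_le (fun k => ?_) (fun k => ?_) (pois_sq_summable (μ := μ))
    · have : (0:ℝ) ≤ Real.log (Nat.factorial k) :=
        Real.log_nonneg (by exact_mod_cast Nat.one_le_iff_ne_zero.mpr (Nat.factorial_ne_zero k))
      exact mul_nonneg (pois_pos hμ k).le this
    · exact mul_le_mul_of_nonneg_left (log_factorial_le k) (pois_pos hμ k).le
  have h : Summable (fun k => poissonPMF μ k * (-μ) + (poissonPMF μ k * k) * Real.log μ
      - poissonPMF μ k * Real.log (Nat.factorial k)) :=
    ((pois_summable.mul_right (-μ)).add (pois_mul_summable.mul_right (Real.log μ))).sub h3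
  refine h.congr fun k => ?_
  rw [pois_log hμ]; ring



variable {α β γ : Type*}

lemma summable_mul_prod {f : α → ℝ} {g : β → ℝ} (hf : Summable f) (hg : Summable g) :
    Summable (fun z : α × β => f z.1 * g z.2) := by
  refine Summable.of_abs ?_
  have := Summable.mul_of_nonneg hf.abs hg.abs (fun a => abs_nonneg _) (fun b => abs_nonneg _)
  exact this.congr fun z => (abs_mul _ _).symm

lemma tsum_mul_prod {f : α → ℝ} {g : β → ℝ} (hf : Summable f) (hg : Summable g) :
    ∑' z : α × β, f z.1 * g z.2 = (∑' a, f a) * (∑' b, g b) := by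
  rw [Summable.tsum_prod' (summable_mul_prod hf hg) (fun a => hg.mul_left (f a))]
  simp_rw [tsum_mul_left]
  rw [tsum_mul_right]

section Vec

variable (P : α → ℝ) (r : α → ℝ)

set_option maxHeartbeats 2000000 in
lemma vec_lemma (hP : Summable P) (hP1 : ∑' a, P a = 1)
    (hPr : Summable (fun a => P a * r a)) (n : ℕ) :
    (Summable (fun v : Fin n → α => ∏ i, P (v i))
      ∧ ∑' v : Fin n → α, ∏ i, P (v i) = 1)
    ∧ (Summable (fun v : Fin n → α => (∏ i, P (v i)) * ∑ i, r (v i))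
      ∧ ∑' v : Fin n → α, (∏ i, P (v i)) * ∑ i, r (v i) = n * ∑' a, P a * r a) := by
  induction n with
  | zero =>
    have hA : (fun v : Fin 0 → α => ∏ i, P (v i)) = fun _ => 1 := by
      funext v; simp
    have hG : (fun v : Fin 0 → α => (∏ i, P (v i)) * ∑ i, r (v i)) = fun _ => 0 := by
      funext v; simp
    constructor
    · constructor
      · rw [hA]; exact summable_of_finite_support (Set.toFinite _)
      · rw [hA, tsum_eq_single (default : Fin 0 → α) (fun b hb => absurd (Subsingleton.elim b _) hb)]
    · constructor
      · rw [hG]; exact summable_zero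
      · rw [hG]; simp
  | succ n ih =>
    obtain ⟨⟨hAs, hAt⟩, ⟨hGs, hGt⟩⟩ := ih
    -- A (n+1) ∘ e
    have hcompA : ∀ z : α × (Fin n → α), (∏ i, P ((Fin.consEquiv (fun _ : Fin (n+1) => α) z) i)) = P z.1 * ∏ i, P (z.2 i) := by
      intro z
      rw [Fin.prod_univ_succ]
      simp only [Fin.consEquiv_apply, Fin.cons_zero, Fin.cons_succ]
    have hcompG : ∀ z : α × (Fin n → α),
        (∏ i, P ((Fin.consEquiv (fun _ : Fin (n+1) => α) z) i)) * ∑ i, r ((Fin.consEquiv (fun _ : Fin (n+1) => α) z) i)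
          = (P z.1 * r z.1) * (∏ i, P (z.2 i)) + P z.1 * ((∏ i, P (z.2 i)) * ∑ i, r (z.2 i)) := by
      intro z
      rw [Fin.prod_univ_succ, Fin.sum_univ_succ]
      simp only [Fin.consEquiv_apply, Fin.cons_zero, Fin.cons_succ]
      ring
    have hAs' : Summable (fun z : α × (Fin n → α) => P z.1 * ∏ i, P (z.2 i)) :=
      summable_mul_prod (f := P) (g := (fun v : Fin n → α => ∏ i, P (v i))) hP hAs
    have hGs1 : Summable (fun z : α × (Fin n → α) => (P z.1 * r z.1) * ∏ i, P (z.2 i)) :=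
      summable_mul_prod (f := fun a => P a * r a) (g := (fun v : Fin n → α => ∏ i, P (v i))) hPr hAs
    have hGs2 : Summable (fun z : α × (Fin n → α) =>
        P z.1 * ((∏ i, P (z.2 i)) * ∑ i, r (z.2 i))) :=
      summable_mul_prod (f := P) (g := (fun v : Fin n → α => (∏ i, P (v i)) * ∑ i, r (v i))) hP hGs
    constructor
    · constructor
      · rw [← (Fin.consEquiv (fun _ : Fin (n+1) => α)).summable_iff]
        exact hAs'.congr fun z => (hcompA z).symm
      · rw [← (Fin.consEquiv (fun _ : Fin (n+1) => α)).tsum_eq]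
        calc ∑' z : α × (Fin n → α), ∏ i, P ((Fin.consEquiv (fun _ : Fin (n+1) => α) z) i)
            = ∑' z : α × (Fin n → α), P z.1 * ∏ i, P (z.2 i) := tsum_congr hcompA
          _ = 1 := by rw [tsum_mul_prod (f := P) (g := (fun v : Fin n → α => ∏ i, P (v i))) hP hAs, hP1, hAt, mul_one]
    · constructor
      · rw [← (Fin.consEquiv (fun _ : Fin (n+1) => α)).summable_iff]
        exact (hGs1.add hGs2).congr fun z => (hcompG z).symm
      · rw [← (Fin.consEquiv (fun _ : Fin (n+1) => α)).tsum_eq]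
        calc ∑' z : α × (Fin n → α), (∏ i, P ((Fin.consEquiv (fun _ : Fin (n+1) => α) z) i)) * ∑ i, r ((Fin.consEquiv (fun _ : Fin (n+1) => α) z) i)
            = ∑' z : α × (Fin n → α), ((P z.1 * r z.1) * (∏ i, P (z.2 i))
                + P z.1 * ((∏ i, P (z.2 i)) * ∑ i, r (z.2 i))) := tsum_congr hcompG
          _ = (∑' a, P a * r a) * 1 + 1 * (n * ∑' a, P a * r a) := by
              rw [Summable.tsum_add hGs1 hGs2, tsum_mul_prod (f := fun a => P a * r a) (g := (fun v : Fin n → α => ∏ i, P (v i))) hPr hAs, tsum_mul_prod (f := P) (g := (fun v : Fin n → α => (∏ i, P (v i)) * ∑ i, r (v i))) hP hGs,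
                hP1, hAt, hGt]
          _ = (n + 1 : ℕ) * ∑' a, P a * r a := by push_cast; ring

end Vec


/-- Trees are equivalent to a sigma type of tuples. -/
def ptreeEquiv : PTree ≃ Σ n : ℕ, Fin n → PTree :=
  (⟨fun t => match t with | .node l => l, PTree.node,
    fun t => by cases t; rfl, fun _ => rfl⟩ : PTree ≃ List PTree).trans List.equivSigmaTuple

lemma ptreeEquiv_symm (n : ℕ) (v : Fin n → PTree) :
    ptreeEquiv.symm ⟨n, v⟩ = PTree.node (List.ofFn v) := rfl

open Classical in
lemma gw_zero_eq (μ : ℝ) : gw μ 0 = fun t => if t = PTree.node [] then (1 : ℝ) else 0 := by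
  funext t
  rcases t with ⟨l⟩
  rcases l with _ | ⟨a, l⟩ <;> simp [gw]

lemma gw_succ (μ : ℝ) (d : ℕ) (l : List PTree) :
    gw μ (d + 1) (.node l) = poissonPMF μ l.length * (l.map (gw μ d)).prod := rfl

lemma gw_succ_sigma (μ : ℝ) (d : ℕ) (x : Σ n : ℕ, Fin n → PTree) :
    gw μ (d + 1) (ptreeEquiv.symm x) = poissonPMF μ x.1 * ∏ i, gw μ d (x.2 i) := by
  rcases x with ⟨n, v⟩
  rw [ptreeEquiv_symm, gw_succ, List.length_ofFn, List.map_ofFn, List.prod_ofFn]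
  rfl

lemma gw_nonneg {μ : ℝ} (hμ : 0 < μ) : ∀ (d : ℕ) (t : PTree), 0 ≤ gw μ d t := by
  intro d
  induction d with
  | zero =>
    intro t; rw [gw_zero_eq]
    dsimp only; split <;> norm_num
  | succ d ih =>
    intro t
    rcases t with ⟨l⟩
    rw [gw_succ]
    refine mul_nonneg (by unfold poissonPMF; positivity : (0:ℝ) ≤ poissonPMF μ l.length) (List.prod_nonneg ?_)
    intro a ha
    rcases List.mem_map.mp ha with ⟨s, _, rfl⟩
    exact ih s

lemma gw_all {μ : ℝ} (hμ : 0 < μ) (d : ℕ) :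
    (Summable (gw μ d) ∧ ∑' t, gw μ d t = 1)
    ∧ (Summable (fun t => gw μ d t * Real.log (gw μ d t))
      ∧ ∑' t, gw μ d t * Real.log (gw μ d t)
          = (∑' k, poissonPMF μ k * Real.log (poissonPMF μ k)) * ∑ i ∈ Finset.range d, μ ^ i) := by
  induction d with
  | zero =>
    classical
    rw [gw_zero_eq]
    refine ⟨⟨?_, ?_⟩, ?_, ?_⟩
    · apply summable_of_ne_finset_zero (s := ({PTree.node []} : Finset PTree))
      intro b hb
      simp only [Finset.mem_singleton] at hb
      simp [hb]
    · rw [tsum_eq_single (PTree.node []) (fun b hb => by simp [hb])]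
      simp
    · have hz : (fun t => (if t = PTree.node [] then (1:ℝ) else 0)
          * Real.log (if t = PTree.node [] then (1:ℝ) else 0)) = fun _ => (0:ℝ) := by
        funext t
        by_cases h : t = PTree.node [] <;> simp [h]
      rw [hz]
      exact summable_zero
    · have hz : (fun t => (if t = PTree.node [] then (1:ℝ) else 0)
          * Real.log (if t = PTree.node [] then (1:ℝ) else 0)) = fun _ => (0:ℝ) := by
        funext t
        by_cases h : t = PTree.node [] <;> simp [h]
      rw [hz]
      simp
  | succ d ih =>
    obtain ⟨⟨hS, hT⟩, hSl, hTl⟩ := ih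
    have hP0 : ∀ t, 0 ≤ gw μ d t := gw_nonneg hμ d
    have habs : Summable (fun t => gw μ d t * |Real.log (gw μ d t)|) := by
      refine hSl.abs.congr fun t => ?_
      rw [abs_mul, abs_of_nonneg (hP0 t)]
    have hvec := fun n : ℕ =>
      vec_lemma (gw μ d) (fun t => Real.log (gw μ d t)) hS hT hSl n
    have hvec' := fun n : ℕ =>
      vec_lemma (gw μ d) (fun t => |Real.log (gw μ d t)|) hS hT habs n
    have hfib : ∀ n : ℕ,
        Summable (fun v : Fin n → PTree => poissonPMF μ n * ∏ i, gw μ d (v i)) :=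
      fun n => ((hvec n).1.1).mul_left _
    have hsigF : Summable
        (fun x : Σ n : ℕ, Fin n → PTree => poissonPMF μ x.1 * ∏ i, gw μ d (x.2 i)) := by
      refine (summable_sigma_of_nonneg ?_).mpr ⟨fun n => hfib n, ?_⟩
      · intro x
        exact mul_nonneg (pois_pos hμ _).le (Finset.prod_nonneg fun i _ => hP0 _)
      · refine (pois_summable (μ := μ)).congr fun n => ?_
        show poissonPMF μ n = ∑' v : Fin n → PTree, poissonPMF μ n * ∏ i, gw μ d (v i)
        rw [tsum_mul_left, (hvec n).1.2, mul_one]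
    have hsig : Summable
        (fun x : Σ n : ℕ, Fin n → PTree => gw μ (d+1) (ptreeEquiv.symm x)) :=
      hsigF.congr fun x => (gw_succ_sigma μ d x).symm
    have hSd1 : Summable (gw μ (d+1)) := (Equiv.summable_iff ptreeEquiv.symm).mp hsig
    have hTd1 : ∑' t, gw μ (d+1) t = 1 := by
      rw [← Equiv.tsum_eq ptreeEquiv.symm (gw μ (d+1))]
      calc ∑' x : Σ n : ℕ, Fin n → PTree, gw μ (d+1) (ptreeEquiv.symm x)
          = ∑' x : Σ n : ℕ, Fin n → PTree, poissonPMF μ x.1 * ∏ i, gw μ d (x.2 i) :=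
            tsum_congr (gw_succ_sigma μ d)
        _ = ∑' n : ℕ, ∑' v : Fin n → PTree, poissonPMF μ n * ∏ i, gw μ d (v i) :=
            Summable.tsum_sigma' (fun n => hfib n) hsigF
        _ = ∑' n : ℕ, poissonPMF μ n :=
            tsum_congr fun n => by rw [tsum_mul_left, (hvec n).1.2, mul_one]
        _ = 1 := pois_tsum
    -- entropy part
    have hpoint : ∀ x : Σ n : ℕ, Fin n → PTree,
        gw μ (d+1) (ptreeEquiv.symm x) * Real.log (gw μ (d+1) (ptreeEquiv.symm x))
        = (poissonPMF μ x.1 * Real.log (poissonPMF μ x.1)) * (∏ i, gw μ d (x.2 i))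
          + poissonPMF μ x.1 *
              ((∏ i, gw μ d (x.2 i)) * ∑ i, Real.log (gw μ d (x.2 i))) := by
      intro x
      rw [gw_succ_sigma]
      by_cases hPi : (∏ i, gw μ d (x.2 i)) = 0
      · rw [hPi]; simp
      · have hne : ∀ i, gw μ d (x.2 i) ≠ 0 := by
          intro i hi
          exact hPi (Finset.prod_eq_zero (Finset.mem_univ i) hi)
        rw [Real.log_mul (pois_pos hμ _).ne' hPi, Real.log_prod (fun i _ => hne i)]
        ring
    have hbound : ∀ x : Σ n : ℕ, Fin n → PTree,
        |gw μ (d+1) (ptreeEquiv.symm x) * Real.log (gw μ (d+1) (ptreeEquiv.symm x))|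
        ≤ |poissonPMF μ x.1 * Real.log (poissonPMF μ x.1)| * (∏ i, gw μ d (x.2 i))
          + poissonPMF μ x.1 *
              ((∏ i, gw μ d (x.2 i)) * ∑ i, |Real.log (gw μ d (x.2 i))|) := by
      intro x
      rw [hpoint x]
      have hPr0 : (0:ℝ) ≤ ∏ i, gw μ d (x.2 i) := Finset.prod_nonneg fun i _ => hP0 _
      have hp0 : (0:ℝ) ≤ poissonPMF μ x.1 := (pois_pos hμ _).le
      refine (abs_add_le _ _).trans (add_le_add ?_ ?_)
      · rw [abs_mul, abs_of_nonneg hPr0]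
      · rw [abs_mul, abs_of_nonneg hp0, abs_mul, abs_of_nonneg hPr0]
        refine mul_le_mul_of_nonneg_left (mul_le_mul_of_nonneg_left ?_ hPr0) hp0
        exact Finset.abs_sum_le_sum_abs _ _
    have hfibH : ∀ n : ℕ, Summable (fun v : Fin n → PTree =>
        (poissonPMF μ n * Real.log (poissonPMF μ n)) * (∏ i, gw μ d (v i))
          + poissonPMF μ n * ((∏ i, gw μ d (v i)) * ∑ i, Real.log (gw μ d (v i)))) :=
      fun n => (((hvec n).1.1).mul_left _).add (((hvec n).2.1).mul_left _)
    have hfibD : ∀ n : ℕ, Summable (fun v : Fin n → PTree =>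
        |poissonPMF μ n * Real.log (poissonPMF μ n)| * (∏ i, gw μ d (v i))
          + poissonPMF μ n * ((∏ i, gw μ d (v i)) * ∑ i, |Real.log (gw μ d (v i))|)) :=
      fun n => (((hvec n).1.1).mul_left _).add (((hvec' n).2.1).mul_left _)
    have hvalD : ∀ n : ℕ, ∑' v : Fin n → PTree,
        (|poissonPMF μ n * Real.log (poissonPMF μ n)| * (∏ i, gw μ d (v i))
          + poissonPMF μ n * ((∏ i, gw μ d (v i)) * ∑ i, |Real.log (gw μ d (v i))|))
        = |poissonPMF μ n * Real.log (poissonPMF μ n)|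
            + poissonPMF μ n * ((n:ℝ) * ∑' t, gw μ d t * |Real.log (gw μ d t)|) := by
      intro n
      rw [Summable.tsum_add (((hvec n).1.1).mul_left _) (((hvec' n).2.1).mul_left _),
        tsum_mul_left, tsum_mul_left, (hvec n).1.2, (hvec' n).2.2, mul_one]
    have hvalH : ∀ n : ℕ, ∑' v : Fin n → PTree,
        ((poissonPMF μ n * Real.log (poissonPMF μ n)) * (∏ i, gw μ d (v i))
          + poissonPMF μ n * ((∏ i, gw μ d (v i)) * ∑ i, Real.log (gw μ d (v i))))
        = poissonPMF μ n * Real.log (poissonPMF μ n)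
            + poissonPMF μ n * ((n:ℝ) * ∑' t, gw μ d t * Real.log (gw μ d t)) := by
      intro n
      rw [Summable.tsum_add (((hvec n).1.1).mul_left _) (((hvec n).2.1).mul_left _),
        tsum_mul_left, tsum_mul_left, (hvec n).1.2, (hvec n).2.2, mul_one]
    have hD : Summable (fun x : Σ n : ℕ, Fin n → PTree =>
        |poissonPMF μ x.1 * Real.log (poissonPMF μ x.1)| * (∏ i, gw μ d (x.2 i))
          + poissonPMF μ x.1 *
              ((∏ i, gw μ d (x.2 i)) * ∑ i, |Real.log (gw μ d (x.2 i))|)) := by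
      refine (summable_sigma_of_nonneg ?_).mpr ⟨?_, ?_⟩
      · intro x
        have hPr0 : (0:ℝ) ≤ ∏ i, gw μ d (x.2 i) := Finset.prod_nonneg fun i _ => hP0 _
        have hs0 : (0:ℝ) ≤ ∑ i, |Real.log (gw μ d (x.2 i))| :=
          Finset.sum_nonneg fun i _ => abs_nonneg _
        have hp0 : (0:ℝ) ≤ poissonPMF μ x.1 := (pois_pos hμ _).le
        positivity
      · exact fun n => hfibD n
      · have hsum2 : Summable (fun n : ℕ =>
            |poissonPMF μ n * Real.log (poissonPMF μ n)|
              + poissonPMF μ n * ((n:ℝ) * ∑' t, gw μ d t * |Real.log (gw μ d t)|)) :=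
          (pois_plogp_summable hμ).abs.add
            (((pois_mul_summable (μ := μ)).mul_right
              (∑' t, gw μ d t * |Real.log (gw μ d t)|)).congr fun n => mul_assoc _ _ _)
        exact hsum2.congr fun n => (hvalD n).symm
    have hsigh : Summable (fun x : Σ n : ℕ, Fin n → PTree =>
        gw μ (d+1) (ptreeEquiv.symm x) * Real.log (gw μ (d+1) (ptreeEquiv.symm x))) :=
      Summable.of_abs (Summable.of_nonneg_of_le (fun x => abs_nonneg _) hbound hD)
    have hSld1 : Summable (fun t => gw μ (d+1) t * Real.log (gw μ (d+1) t)) :=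
      (Equiv.summable_iff ptreeEquiv.symm).mp hsigh
    refine ⟨⟨hSd1, hTd1⟩, hSld1, ?_⟩
    calc ∑' t, gw μ (d+1) t * Real.log (gw μ (d+1) t)
        = ∑' x : Σ n : ℕ, Fin n → PTree,
            gw μ (d+1) (ptreeEquiv.symm x) * Real.log (gw μ (d+1) (ptreeEquiv.symm x)) :=
          (Equiv.tsum_eq ptreeEquiv.symm _).symm
      _ = ∑' x : Σ n : ℕ, Fin n → PTree,
            ((poissonPMF μ x.1 * Real.log (poissonPMF μ x.1)) * (∏ i, gw μ d (x.2 i))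
              + poissonPMF μ x.1 *
                  ((∏ i, gw μ d (x.2 i)) * ∑ i, Real.log (gw μ d (x.2 i)))) :=
          tsum_congr hpoint
      _ = ∑' n : ℕ, ∑' v : Fin n → PTree,
            ((poissonPMF μ n * Real.log (poissonPMF μ n)) * (∏ i, gw μ d (v i))
              + poissonPMF μ n *
                  ((∏ i, gw μ d (v i)) * ∑ i, Real.log (gw μ d (v i)))) :=
          Summable.tsum_sigma' (fun n => hfibH n) (hsigh.congr hpoint)
      _ = ∑' n : ℕ, (poissonPMF μ n * Real.log (poissonPMF μ n)
            + poissonPMF μ n * ((n:ℝ) * ∑' t, gw μ d t * Real.log (gw μ d t))) :=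
          tsum_congr fun n => hvalH n
      _ = (∑' k, poissonPMF μ k * Real.log (poissonPMF μ k))
            + μ * ∑' t, gw μ d t * Real.log (gw μ d t) := by
          rw [Summable.tsum_add (pois_plogp_summable hμ)
            (((pois_mul_summable (μ := μ)).mul_right
              (∑' t, gw μ d t * Real.log (gw μ d t))).congr fun n => mul_assoc _ _ _)]
          congr 1
          calc ∑' n : ℕ, poissonPMF μ n * ((n:ℝ) * ∑' t, gw μ d t * Real.log (gw μ d t))
              = ∑' n : ℕ, (poissonPMF μ n * (n:ℝ)) * ∑' t, gw μ d t * Real.log (gw μ d t) :=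
                tsum_congr fun n => (mul_assoc _ _ _).symm
            _ = (∑' n : ℕ, poissonPMF μ n * (n:ℝ)) * ∑' t, gw μ d t * Real.log (gw μ d t) :=
                tsum_mul_right
            _ = μ * ∑' t, gw μ d t * Real.log (gw μ d t) := by rw [pois_mean]
      _ = (∑' k, poissonPMF μ k * Real.log (poissonPMF μ k))
            * ∑ i ∈ Finset.range (d+1), μ ^ i := by
          rw [hTl, geom_sum_succ]
          ring

end GWAux

theorem stmt_5 (μ : ℝ) (hμ : 0 < μ) :
    (∀ d : ℕ, ent (gw μ (d + 1)) =
      ent (gw μ d) + μ ^ d * (-∑' k : ℕ, poissonPMF μ k * Real.log (poissonPMF μ k))) ∧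
    (μ < 1 → ∀ d : ℕ,
      ent (gw μ d) ≤ (-∑' k : ℕ, poissonPMF μ k * Real.log (poissonPMF μ k)) / (1 - μ)) := by
  have key : ∀ d : ℕ, ent (gw μ d) =
      (-∑' k : ℕ, poissonPMF μ k * Real.log (poissonPMF μ k)) * ∑ i ∈ Finset.range d, μ ^ i := by
    intro d
    have h := ((GWAux.gw_all hμ d).2).2
    rw [ent, h]
    ring
  constructor
  · intro d
    rw [key (d+1), key d, geom_sum_succ']
    ring
  · intro hμ1 d
    rw [key d]
    have hSπ : (0:ℝ) ≤ -∑' k : ℕ, poissonPMF μ k * Real.log (poissonPMF μ k) := by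
      rw [neg_nonneg]
      refine tsum_nonpos fun k => ?_
      exact mul_nonpos_of_nonneg_of_nonpos (GWAux.pois_pos hμ k).le
        (Real.log_nonpos (GWAux.pois_pos hμ k).le (GWAux.pois_le_one hμ k))
    have hgeom : ∑ i ∈ Finset.range d, μ ^ i ≤ 1 / (1 - μ) := by
      rw [geom_sum_eq (by linarith : μ ≠ 1)]
      have h1 : (μ ^ d - 1) / (μ - 1) = (1 - μ ^ d) / (1 - μ) := by
        rw [← neg_div_neg_eq]
        ring_nf
      rw [h1]
      have hd0 : (0:ℝ) ≤ μ ^ d := by positivity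
      gcongr
      · linarith
    calc (-∑' k : ℕ, poissonPMF μ k * Real.log (poissonPMF μ k)) * ∑ i ∈ Finset.range d, μ ^ i
        ≤ (-∑' k : ℕ, poissonPMF μ k * Real.log (poissonPMF μ k)) * (1 / (1 - μ)) :=
          mul_le_mul_of_nonneg_left hgeom hSπ
      _ = (-∑' k : ℕ, poissonPMF μ k * Real.log (poissonPMF μ k)) / (1 - μ) := by ring
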